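/- The group presented by ⟨x_1,...,x_p, y, z | x_i^{k_i} = 1, y^b = 1, z^c = 1, x_1⋯x_p y z = z x_1⋯x_p y, and x_i⋯x_p y z x_1⋯x_{i−1} = x_{i+1}⋯x_p y z x_1⋯x_i for all 1 ≤ i ≤ p⟩ is isomorphic to the generalized parent J-group J(k_1,...,k_p, b, c) (with x_i ↦ s_i, y ↦ s_{p+1}, z ↦ s_{p+2}). -/

import Mathlib

/-- The cyclically rotated product `a_i a_{i+1} ⋯ a_{i+p-1}` in the free group on `Fin p`
(indices taken mod `p`). -/
def cycProd (p : ℕ) (i : Fin p) : FreeGroup (Fin p) :=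
  (List.ofFn (fun j : Fin p => FreeGroup.of (i + j))).prod

/-- Relators of the generalized parent J-group `J(K)`:
`⟨s_1,…,s_p ∣ s_1⋯s_p = s_2⋯s_p s_1 = ⋯ = s_p s_1⋯s_{p-1}, s_i^{k_i} = 1 if k_i < ∞⟩`.
Here `k i = 0` encodes `k_i = ∞` (the relator `s_i ^ 0` is vacuous), and the equalities of
all cyclic rotations of the product are encoded by the relators
`(s_i ⋯ s_{i+p-1}) (s_j ⋯ s_{j+p-1})⁻¹`. -/
def JRels (p : ℕ) (k : Fin p → ℕ) : Set (FreeGroup (Fin p)) :=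
  {r | (∃ i, r = FreeGroup.of i ^ k i) ∨ ∃ i j, r = cycProd p i * (cycProd p j)⁻¹}

/-- The generalized parent J-group `J(K)`. -/
abbrev JGroup (p : ℕ) (k : Fin p → ℕ) := PresentedGroup (JRels p k)

/-- The central element `z = s_1 s_2 ⋯ s_p` of `J(K)`. -/
def zElt (p : ℕ) (k : Fin p → ℕ) : JGroup p k :=
  (List.ofFn (fun i : Fin p => (PresentedGroup.of i : JGroup p k))).prod

open Fin.NatCast in
/-- The product `x_a x_{a+1} ⋯ x_{b-1}` of consecutive `x`-generators in the free group on
`Fin (p+2)` (the generators `x_0,…,x_{p-1}, y = p, z = p+1`). -/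
def seg (p a b : ℕ) : FreeGroup (Fin (p + 2)) :=
  ((List.range (b - a)).map (fun t => FreeGroup.of ((a + t : ℕ) : Fin (p + 2)))).prod

open Fin.NatCast in
/-- The generator `y`. -/
def yGen (p : ℕ) : FreeGroup (Fin (p + 2)) := FreeGroup.of ((p : ℕ) : Fin (p + 2))

open Fin.NatCast in
/-- The generator `z`. -/
def zGen (p : ℕ) : FreeGroup (Fin (p + 2)) := FreeGroup.of ((p + 1 : ℕ) : Fin (p + 2))

/-- Relators of the torsion quotient `B**(p,p;K,b,c)` of the J-braid group (with euclidean
division `p = 1·p + 0`): torsion relators `x_i^{k_i}, y^b, z^c` (the exponent function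
`κ : Fin (p+2) → ℕ` collects `k, b, c`; `0` means `∞`), the relator expressing
`x_1⋯x_p y z = z x_1⋯x_p y`, and for each `1 ≤ i ≤ p` the relator expressing
`x_i⋯x_p y z x_1⋯x_{i−1} = x_{i+1}⋯x_p y z x_1⋯x_i` (written here with 0-based indices). -/
def braidRels (p : ℕ) (κ : Fin (p + 2) → ℕ) : Set (FreeGroup (Fin (p + 2))) :=
  {r | (∃ i, r = FreeGroup.of i ^ κ i) ∨
    r = (seg p 0 p * yGen p * zGen p) * (zGen p * seg p 0 p * yGen p)⁻¹ ∨
    ∃ i : Fin p, r = (seg p i p * yGen p * zGen p * seg p 0 i) *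
      (seg p ((i : ℕ) + 1) p * yGen p * zGen p * seg p 0 ((i : ℕ) + 1))⁻¹}

/-- The exponent function on `Fin (p+2)` given by `k` on the first `p` indices, `b` at
index `p` and `c` at index `p+1`. -/
def extFun (p : ℕ) (k : Fin p → ℕ) (b c : ℕ) : Fin (p + 2) → ℕ :=
  fun i => if h : (i : ℕ) < p then k ⟨i, h⟩ else if (i : ℕ) = p then b else c


section Aux

open Fin.NatCast

lemma seg_self (p a : ℕ) : seg p a a = 1 := by simp [seg]

lemma seg_single (p a : ℕ) : seg p a (a+1) = FreeGroup.of ((a : ℕ) : Fin (p+2)) := by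
  simp [seg, List.range_succ]

lemma seg_append (p a b c : ℕ) (hab : a ≤ b) (hbc : b ≤ c) :
    seg p a c = seg p a b * seg p b c := by
  unfold seg
  have h : c - a = (b - a) + (c - b) := by omega
  rw [h, List.range_add, List.map_append, List.prod_append, List.map_map]
  congr 2
  apply List.map_congr_left
  intro t ht
  simp only [Function.comp_apply]
  have : a + (b - a + t) = b + t := by omega
  rw [this]

lemma seg_shift (p a b : ℕ) : seg p (a + (p+2)) (b + (p+2)) = seg p a b := by
  unfold seg
  have h : b + (p+2) - (a + (p+2)) = b - a := by omega
  rw [h]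
  congr 1
  apply List.map_congr_left
  intro t ht
  have h2 : a + (p + 2) + t = (a + t) + (p + 2) := by omega
  rw [h2, Nat.cast_add, Fin.natCast_self, add_zero]

lemma cycProd_cast (p m : ℕ) :
    cycProd (p+2) ((m : ℕ) : Fin (p+2)) = seg p m (m + (p+2)) := by
  unfold cycProd seg
  have h : m + (p+2) - m = p + 2 := by omega
  rw [h, List.ofFn_eq_map, ← (show (List.finRange (p+2)).map Fin.val = List.range (p+2) from
    List.ext_getElem (by simp) (by simp)), List.map_map]
  congr 1
  apply List.map_congr_left
  intro j _
  simp only [Function.comp_apply]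
  congr 1
  rw [Nat.cast_add, Fin.cast_val_eq_self]

lemma cycProd_form (p m : ℕ) (hm : m ≤ p) :
    cycProd (p+2) ((m : ℕ) : Fin (p+2)) =
      seg p m p * yGen p * zGen p * seg p 0 m := by
  rw [cycProd_cast,
    seg_append p m (p+2) (m + (p+2)) (by omega) (by omega),
    seg_append p m p (p+2) hm (by omega),
    seg_append p p (p+1) (p+2) (by omega) (by omega)]
  have h1 : seg p p (p+1) = yGen p := seg_single p p
  have h2 : seg p (p+1) (p+2) = zGen p := seg_single p (p+1)
  have h3 : seg p (p+2) (m + (p+2)) = seg p 0 m := by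
    have := seg_shift p 0 m
    simpa using this
  rw [h1, h2, h3]
  group

lemma cycProd_last (p : ℕ) :
    cycProd (p+2) ((p+1 : ℕ) : Fin (p+2)) =
      zGen p * seg p 0 p * yGen p := by
  rw [cycProd_cast,
    seg_append p (p+1) (p+2) ((p+1) + (p+2)) (by omega) (by omega)]
  have h2 : seg p (p+1) (p+2) = zGen p := seg_single p (p+1)
  have h3 : seg p (p+2) ((p+1) + (p+2)) = seg p 0 (p+1) := by
    have := seg_shift p 0 (p+1)
    simpa using this
  rw [h2, h3, seg_append p 0 p (p+1) (by omega) (by omega), seg_single p p]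
  group
  rfl

lemma closure_eq (p : ℕ) (κ : Fin (p+2) → ℕ) :
    Subgroup.normalClosure (braidRels p κ) = Subgroup.normalClosure (JRels (p+2) κ) := by
  apply le_antisymm
  · apply Subgroup.normalClosure_le_normal
    intro r hr
    apply Subgroup.subset_normalClosure
    rcases hr with ⟨i, rfl⟩ | hr | ⟨i, hr⟩
    · exact Or.inl ⟨i, rfl⟩
    · refine Or.inr ⟨((0:ℕ) : Fin (p+2)), ((p+1 : ℕ) : Fin (p+2)), ?_⟩
      rw [hr, cycProd_form p 0 (by omega), cycProd_last, seg_self]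
      group
    · refine Or.inr ⟨(((i:ℕ) : ℕ) : Fin (p+2)), (((i:ℕ)+1 : ℕ) : Fin (p+2)), ?_⟩
      rw [hr, cycProd_form p (i:ℕ) (le_of_lt i.isLt), cycProd_form p ((i:ℕ)+1) i.isLt]
  · apply Subgroup.normalClosure_le_normal
    intro r hr
    have hmem : ∀ m : ℕ, m ≤ p → cycProd (p+2) ((0:ℕ) : Fin (p+2)) *
        (cycProd (p+2) ((m : ℕ) : Fin (p+2)))⁻¹ ∈
          Subgroup.normalClosure (braidRels p κ) := by
      intro m
      induction m with
      | zero =>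
        intro _
        simp only [mul_inv_cancel]
        exact one_mem _
      | succ n ih =>
        intro hn
        have h1 := ih (by omega)
        have h2 : cycProd (p+2) ((n : ℕ) : Fin (p+2)) *
            (cycProd (p+2) ((n+1 : ℕ) : Fin (p+2)))⁻¹ ∈
              Subgroup.normalClosure (braidRels p κ) := by
          apply Subgroup.subset_normalClosure
          refine Or.inr (Or.inr ⟨⟨n, by omega⟩, ?_⟩)
          rw [cycProd_form p n (by omega), cycProd_form p (n+1) hn]
        have h3 := mul_mem h1 h2
        have heq : (cycProd (p+2) ((0:ℕ) : Fin (p+2)) *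
            (cycProd (p+2) ((n : ℕ) : Fin (p+2)))⁻¹) *
            (cycProd (p+2) ((n : ℕ) : Fin (p+2)) *
            (cycProd (p+2) ((n+1 : ℕ) : Fin (p+2)))⁻¹) =
            cycProd (p+2) ((0:ℕ) : Fin (p+2)) *
            (cycProd (p+2) ((n+1 : ℕ) : Fin (p+2)))⁻¹ := by group
        rwa [heq] at h3
    have hall : ∀ j : Fin (p+2), cycProd (p+2) ((0:ℕ) : Fin (p+2)) *
        (cycProd (p+2) j)⁻¹ ∈ Subgroup.normalClosure (braidRels p κ) := by
      intro j
      rcases lt_or_ge (j : ℕ) (p+1) with h | h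
      · have := hmem (j : ℕ) (by omega)
        rwa [Fin.cast_val_eq_self] at this
      · have hj : (j : ℕ) = p + 1 := by omega
        have h2 : cycProd (p+2) ((0:ℕ) : Fin (p+2)) *
            (cycProd (p+2) ((p+1 : ℕ) : Fin (p+2)))⁻¹ ∈
              Subgroup.normalClosure (braidRels p κ) := by
          apply Subgroup.subset_normalClosure
          refine Or.inr (Or.inl ?_)
          rw [cycProd_form p 0 (by omega), cycProd_last, seg_self]
          group
        have hjj : ((p+1 : ℕ) : Fin (p+2)) = j := by
          have h4 := Fin.cast_val_eq_self j
          rw [hj] at h4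
          exact h4
        rwa [hjj] at h2
    rcases hr with ⟨i, rfl⟩ | ⟨i, j, rfl⟩
    · exact Subgroup.subset_normalClosure (Or.inl ⟨i, rfl⟩)
    · have h3 := mul_mem (inv_mem (hall i)) (hall j)
      have heq : (cycProd (p+2) ((0:ℕ) : Fin (p+2)) * (cycProd (p+2) i)⁻¹)⁻¹ *
          (cycProd (p+2) ((0:ℕ) : Fin (p+2)) * (cycProd (p+2) j)⁻¹) =
          cycProd (p+2) i * (cycProd (p+2) j)⁻¹ := by group
      rwa [heq] at h3

end Aux

/-- The group presented by
`⟨x_1,…,x_p, y, z ∣ x_i^{k_i} = 1, y^b = 1, z^c = 1, x_1⋯x_p y z = z x_1⋯x_p y,`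
`x_i⋯x_p y z x_1⋯x_{i−1} = x_{i+1}⋯x_p y z x_1⋯x_i (1 ≤ i ≤ p)⟩` is isomorphic to the
generalized parent J-group `J(k_1,…,k_p,b,c)` via `x_i ↦ s_i`, `y ↦ s_{p+1}`, `z ↦ s_{p+2}`. -/
theorem stmt15 (p : ℕ) (k : Fin p → ℕ) (b c : ℕ)
    (hk : ∀ i, k i ≠ 1) (hb : b ≠ 1) (hc : c ≠ 1) :
    ∃ φ : PresentedGroup (braidRels p (extFun p k b c)) ≃*
        JGroup (p + 2) (extFun p k b c),
      ∀ i : Fin (p + 2), φ (PresentedGroup.of i) = PresentedGroup.of i := by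
  exact ⟨QuotientGroup.quotientMulEquivOfEq (closure_eq p (extFun p k b c)), fun i => rfl⟩
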